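/- The four functions m₁ = x₁⁻¹, m₂ = x₁⁻¹·log(x₁/x₂), m₃ = x₁⁻¹·log(x₁/x₃), m₄ = x₁⁻¹·log(x₁/x₂)·log(x₁/x₃), defined on (0,∞)³, are linearly independent over ℝ and each satisfies the three PDEs: (x₁∂₁ + x₂∂₂ + x₃∂₃ + 1)f = 0, (x₂∂₂² + ∂₂)f = 0, (x₃∂₃² + ∂₃)f = 0. -/

import Mathlib

lemma hd_logdiv (c : ℝ) (hc : c ≠ 0) {x : ℝ} (hx : 0 < x) :
    HasDerivAt (fun v => Real.log (v / c)) x⁻¹ x := by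
  have h := (((hasDerivAt_id x).div_const c)).log (div_ne_zero hx.ne' hc)
  convert h using 1
  · rfl
  · simp only [id]
    field_simp

lemma hd_logdiv' (c : ℝ) (hc : c ≠ 0) {x : ℝ} (hx : 0 < x) :
    HasDerivAt (fun v => Real.log (c / v)) (-x⁻¹) x := by
  have h := ((hasDerivAt_const x c).div (hasDerivAt_id x) hx.ne').log (div_ne_zero hc hx.ne')
  convert h using 1
  · rfl
  · simp only [id, Pi.div_apply]
    field_simp
    ring

lemma deriv2_congr {f g : ℝ → ℝ} {x : ℝ} (hx : 0 < x)
    (h : ∀ u, 0 < u → deriv f u = g u) :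
    deriv (fun u => deriv f u) x = deriv g x := by
  apply Filter.EventuallyEq.deriv_eq
  filter_upwards [eventually_gt_nhds hx] with u hu using h u hu



/-- The four starting-monomial functions `m₁ = x₁⁻¹`, `m₂ = x₁⁻¹ log(x₁/x₂)`,
`m₃ = x₁⁻¹ log(x₁/x₃)`, `m₄ = x₁⁻¹ log(x₁/x₂) log(x₁/x₃)`. -/
noncomputable def startMon : Fin 4 → ℝ → ℝ → ℝ → ℝ
  | 0 => fun x1 _ _ => x1⁻¹
  | 1 => fun x1 x2 _ => x1⁻¹ * Real.log (x1 / x2)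
  | 2 => fun x1 _ x3 => x1⁻¹ * Real.log (x1 / x3)
  | 3 => fun x1 x2 x3 => x1⁻¹ * Real.log (x1 / x2) * Real.log (x1 / x3)

/-- The functions `m₁,…,m₄` are linearly independent on `(0,∞)³` and each solves the
PDEs `(x₁∂₁+x₂∂₂+x₃∂₃+1)f = 0`, `(x₂∂₂²+∂₂)f = 0`, `(x₃∂₃²+∂₃)f = 0` generated by the
initial ideal of `I₃` with respect to `w = (−1,0,1)`. -/
theorem startMon_independent_and_solve :
    (∀ a b c d : ℝ,
      (∀ x1 x2 x3 : ℝ, 0 < x1 → 0 < x2 → 0 < x3 →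
        a * startMon 0 x1 x2 x3 + b * startMon 1 x1 x2 x3
          + c * startMon 2 x1 x2 x3 + d * startMon 3 x1 x2 x3 = 0) →
      a = 0 ∧ b = 0 ∧ c = 0 ∧ d = 0) ∧
    (∀ i : Fin 4, ∀ x1 x2 x3 : ℝ, 0 < x1 → 0 < x2 → 0 < x3 →
      (x1 * deriv (fun v => startMon i v x2 x3) x1
        + x2 * deriv (fun v => startMon i x1 v x3) x2
        + x3 * deriv (fun v => startMon i x1 x2 v) x3 + startMon i x1 x2 x3 = 0) ∧
      (x2 * deriv (fun u => deriv (fun v => startMon i x1 v x3) u) x2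
        + deriv (fun v => startMon i x1 v x3) x2 = 0) ∧
      (x3 * deriv (fun u => deriv (fun v => startMon i x1 x2 v) u) x3
        + deriv (fun v => startMon i x1 x2 v) x3 = 0)) := by
  constructor
  · intro a b c d H
    have e1 : (0:ℝ) < 1 := one_pos
    have ee : (0:ℝ) < Real.exp 1 := Real.exp_pos 1
    have h00 := H 1 1 1 e1 e1 e1
    have h10 := H 1 (Real.exp 1) 1 e1 ee e1
    have h01 := H 1 1 (Real.exp 1) e1 e1 ee
    have h11 := H 1 (Real.exp 1) (Real.exp 1) e1 ee ee
    simp only [startMon, one_div, Real.log_inv, Real.log_exp, Real.log_one, inv_one] at h00 h10 h01 h11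
    refine ⟨?_, ?_, ?_, ?_⟩ <;> nlinarith [h00, h10, h01, h11]
  · intro i x1 x2 x3 h1 h2 h3
    fin_cases i
    · refine ⟨?_, ?_, ?_⟩ <;> simp only [startMon] <;>
        simp [deriv_inv, deriv_const'] <;> (try field_simp) <;> ring
    · simp only [startMon]
      have d1 : deriv (fun v => v⁻¹ * Real.log (v / x2)) x1
          = -(x1^2)⁻¹ * Real.log (x1/x2) + x1⁻¹ * x1⁻¹ :=
        ((hasDerivAt_inv h1.ne').mul (hd_logdiv x2 h2.ne' h1)).deriv
      have d2 : ∀ u : ℝ, 0 < u →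
          deriv (fun v => x1⁻¹ * Real.log (x1 / v)) u = x1⁻¹ * -u⁻¹ :=
        fun u hu => ((hd_logdiv' x1 h1.ne' hu).const_mul x1⁻¹).deriv
      have dd2 : deriv (fun u => deriv (fun v => x1⁻¹ * Real.log (x1 / v)) u) x2
          = x1⁻¹ * -(-(x2^2)⁻¹) := by
        rw [deriv2_congr h2 d2]
        exact ((hasDerivAt_inv h2.ne').neg.const_mul x1⁻¹).deriv
      refine ⟨?_, ?_, ?_⟩
      · rw [d1, d2 x2 h2, deriv_const]
        field_simp
        ring
      · rw [dd2, d2 x2 h2]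
        field_simp
        ring
      · simp [deriv_const']
    · simp only [startMon]
      have d1 : deriv (fun v => v⁻¹ * Real.log (v / x3)) x1
          = -(x1^2)⁻¹ * Real.log (x1/x3) + x1⁻¹ * x1⁻¹ :=
        ((hasDerivAt_inv h1.ne').mul (hd_logdiv x3 h3.ne' h1)).deriv
      have d3 : ∀ u : ℝ, 0 < u →
          deriv (fun v => x1⁻¹ * Real.log (x1 / v)) u = x1⁻¹ * -u⁻¹ :=
        fun u hu => ((hd_logdiv' x1 h1.ne' hu).const_mul x1⁻¹).deriv
      have dd3 : deriv (fun u => deriv (fun v => x1⁻¹ * Real.log (x1 / v)) u) x3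
          = x1⁻¹ * -(-(x3^2)⁻¹) := by
        rw [deriv2_congr h3 d3]
        exact ((hasDerivAt_inv h3.ne').neg.const_mul x1⁻¹).deriv
      refine ⟨?_, ?_, ?_⟩
      · rw [d1, d3 x3 h3, deriv_const]
        field_simp
        ring
      · simp [deriv_const']
      · rw [dd3, d3 x3 h3]
        field_simp
        ring
    · simp only [startMon]
      have d1 : deriv (fun v => v⁻¹ * Real.log (v / x2) * Real.log (v / x3)) x1
          = (-(x1^2)⁻¹ * Real.log (x1/x2) + x1⁻¹ * x1⁻¹) * Real.log (x1/x3)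
            + x1⁻¹ * Real.log (x1/x2) * x1⁻¹ :=
        (((hasDerivAt_inv h1.ne').mul (hd_logdiv x2 h2.ne' h1)).mul
          (hd_logdiv x3 h3.ne' h1)).deriv
      have d2 : ∀ u : ℝ, 0 < u →
          deriv (fun v => x1⁻¹ * Real.log (x1 / v) * Real.log (x1 / x3)) u
            = x1⁻¹ * -u⁻¹ * Real.log (x1/x3) :=
        fun u hu => (((hd_logdiv' x1 h1.ne' hu).const_mul x1⁻¹).mul_const _).deriv
      have d3 : ∀ u : ℝ, 0 < u →
          deriv (fun v => x1⁻¹ * Real.log (x1 / x2) * Real.log (x1 / v)) u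
            = x1⁻¹ * Real.log (x1/x2) * -u⁻¹ :=
        fun u hu => ((hd_logdiv' x1 h1.ne' hu).const_mul _).deriv
      have dd2 : deriv (fun u =>
          deriv (fun v => x1⁻¹ * Real.log (x1 / v) * Real.log (x1 / x3)) u) x2
          = x1⁻¹ * -(-(x2^2)⁻¹) * Real.log (x1/x3) := by
        rw [deriv2_congr h2 d2]
        exact (((hasDerivAt_inv h2.ne').neg.const_mul x1⁻¹).mul_const _).deriv
      have dd3 : deriv (fun u =>
          deriv (fun v => x1⁻¹ * Real.log (x1 / x2) * Real.log (x1 / v)) u) x3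
          = x1⁻¹ * Real.log (x1/x2) * -(-(x3^2)⁻¹) := by
        rw [deriv2_congr h3 d3]
        exact ((hasDerivAt_inv h3.ne').neg.const_mul _).deriv
      refine ⟨?_, ?_, ?_⟩
      · rw [d1, d2 x2 h2, d3 x3 h3]
        field_simp
        ring
      · rw [dd2, d2 x2 h2]
        field_simp
        ring
      · rw [dd3, d3 x3 h3]
        field_simp
        ring
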